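/- arXiv:1008.1081 — 4 statements merged into one kernel-verified Lean document; each statement's English description precedes it below -/
import Mathlib

section
/- Let Ã ∈ M be closed and set W := the closure in H of {v_{ζ'} : v ∈ D(Ã*)}. If u ∈ D(Ã) and u_ζ = 0, then pr_W(A_max u) = 0. Consequently the set {(u_ζ, pr_W(A_max u)) : u ∈ D(Ã)} is the graph of a single-valued linear operator from {u_ζ : u ∈ D(Ã)} into W. -/
noncomputable section

open Filter Topology

namespace GrubbExt

variable {H : Type*} [NormedAddCommGroup H] [InnerProductSpace ℂ H] [CompleteSpace H]

/-- The inclusion of a closed subspace composed with the orthogonal projection onto it,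
as a continuous linear map `H →L[ℂ] H`.  This is `i_K ∘ pr_K` in the notation of the paper. -/
def projCl (K : Submodule ℂ H) (hK : IsClosed (K : Set H)) : H →L[ℂ] H :=
  haveI : CompleteSpace K := hK.completeSpace_coe
  K.subtypeL.comp K.orthogonalProjectionOnto

/-- `R` is the (everywhere defined, bounded) inverse of `P - lam`. -/
structure IsResolvent (P : H →ₗ.[ℂ] H) (lam : ℂ) (R : H →L[ℂ] H) : Prop where
  mem : ∀ f : H, R f ∈ P.domain
  left : ∀ u : P.domain, R (P u - lam • (u : H)) = u
  right : ∀ f : H, P ⟨R f, mem f⟩ - lam • R f = f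

/-- `E^λ := I + λ(A_γ - λ)^{-1}`, given the resolvent `R = (A_γ - λ)^{-1}`. -/
def Eop (lam : ℂ) (R : H →L[ℂ] H) : H →L[ℂ] H := ContinuousLinearMap.id ℂ H + lam • R

/-- `E'^{λ̄} := I + λ̄(A_γ^* - λ̄)^{-1}`, given the resolvent `R' = (A_γ^* - λ̄)^{-1}`. -/
def Eop' (lam : ℂ) (R' : H →L[ℂ] H) : H →L[ℂ] H :=
  ContinuousLinearMap.id ℂ H + (starRingEnd ℂ lam) • R'

/-- The resolvent set of a partially defined operator. -/
def resSet (P : H →ₗ.[ℂ] H) : Set ℂ := {lam | ∃ R : H →L[ℂ] H, IsResolvent P lam R}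

/-- The set of "Rayleigh quotients" `Re⟨Pu,u⟩` over unit vectors `u` in the domain of `P`;
the lower bound `m(P)` is the infimum of this set. -/
def raySet (P : H →ₗ.[ℂ] H) : Set ℝ :=
  {r | ∃ u : P.domain, ‖(u : H)‖ = 1 ∧ r = (inner ℂ (P u) (u : H) : ℂ).re}

/-- The abstract set-up of Grubb's extension theory: a dual pair `A_min, A'_min` of closed
densely defined operators in a Hilbert space `H`, together with a reference operator `A_γ`
lying between `A_min` and `A_max := (A'_min)*`, which is bijective with bounded inverse
(and whose adjoint is likewise bijective with bounded inverse). -/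
structure Setup (H : Type*) [NormedAddCommGroup H] [InnerProductSpace ℂ H]
    [CompleteSpace H] where
  Amin : H →ₗ.[ℂ] H
  Amin' : H →ₗ.[ℂ] H
  closed_Amin : IsClosed (Amin.graph : Set (H × H))
  closed_Amin' : IsClosed (Amin'.graph : Set (H × H))
  dense_Amin : Dense (Amin.domain : Set H)
  dense_Amin' : Dense (Amin'.domain : Set H)
  Amin_le_max : Amin ≤ Amin'.adjoint
  Amin'_le_max' : Amin' ≤ Amin.adjoint
  Agam : H →ₗ.[ℂ] H
  Amin_le_Agam : Amin ≤ Agam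
  Agam_le_max : Agam ≤ Amin'.adjoint
  Agaminv : H →L[ℂ] H
  Agaminv_mem : ∀ f : H, Agaminv f ∈ Agam.domain
  Agaminv_left : ∀ u : Agam.domain, Agaminv (Agam u) = u
  Agaminv_right : ∀ f : H, Agam ⟨Agaminv f, Agaminv_mem f⟩ = f
  Agamstarinv : H →L[ℂ] H
  Agamstarinv_mem : ∀ f : H, Agamstarinv f ∈ Agam.adjoint.domain
  Agamstarinv_left : ∀ v : Agam.adjoint.domain, Agamstarinv (Agam.adjoint v) = v
  Agamstarinv_right : ∀ f : H, Agam.adjoint ⟨Agamstarinv f, Agamstarinv_mem f⟩ = f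

namespace Setup

variable (S : Setup H)

/-- `A_max := (A'_min)*`. -/
def Amax : H →ₗ.[ℂ] H := S.Amin'.adjoint

/-- `A'_max := (A_min)*`. -/
def Amax' : H →ₗ.[ℂ] H := S.Amin.adjoint

/-- `u_ζ := u - A_γ^{-1} A_max u`, the nullspace component of `u ∈ D(A_max)`. -/
def uzeta (u : S.Amax.domain) : H := (u : H) - S.Agaminv (S.Amax u)

/-- `v_{ζ'} := v - (A_γ^*)^{-1} A'_max v`, the nullspace component of `v ∈ D(A'_max)`. -/
def vzeta (v : S.Amax'.domain) : H := (v : H) - S.Agamstarinv (S.Amax' v)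

/-- `Z := ker A_max`, as a submodule of `H`. -/
def Zker : Submodule ℂ H := (LinearMap.ker S.Amax.toFun).map S.Amax.domain.subtype

/-- `Z' := ker A'_max`, as a submodule of `H`. -/
def Zker' : Submodule ℂ H := (LinearMap.ker S.Amax'.toFun).map S.Amax'.domain.subtype

lemma coe_Zker :
    (S.Zker : Set H) = ⋂ v : S.Amin'.domain, {y : H | (inner ℂ y (S.Amin' v) : ℂ) = 0} := by
  ext y
  simp only [Set.mem_iInter, Set.mem_setOf_eq, SetLike.mem_coe, Zker, Submodule.mem_map,
    LinearMap.mem_ker]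
  constructor
  · rintro ⟨u, hu, rfl⟩ v
    have h := (LinearPMap.adjoint_isFormalAdjoint S.dense_Amin') u v
    have hu' : S.Amin'.adjoint u = 0 := hu
    rw [hu'] at h
    simpa using h.symm
  · intro h
    have hmem : y ∈ S.Amax.domain := by
      refine LinearPMap.mem_adjoint_domain_of_exists _ ⟨0, fun x => ?_⟩
      simp [h x]
    refine ⟨⟨y, hmem⟩, ?_, rfl⟩
    exact LinearPMap.adjoint_apply_eq S.dense_Amin' ⟨y, hmem⟩ fun x => by simp [h x]

lemma isClosed_Zker : IsClosed (S.Zker : Set H) := by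
  rw [S.coe_Zker]
  exact isClosed_iInter fun v =>
    isClosed_eq (Continuous.inner continuous_id continuous_const) continuous_const

lemma coe_Zker' :
    (S.Zker' : Set H) = ⋂ v : S.Amin.domain, {y : H | (inner ℂ y (S.Amin v) : ℂ) = 0} := by
  ext y
  simp only [Set.mem_iInter, Set.mem_setOf_eq, SetLike.mem_coe, Zker', Submodule.mem_map,
    LinearMap.mem_ker]
  constructor
  · rintro ⟨u, hu, rfl⟩ v
    have h := (LinearPMap.adjoint_isFormalAdjoint S.dense_Amin) u v
    have hu' : S.Amin.adjoint u = 0 := hu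
    rw [hu'] at h
    simpa using h.symm
  · intro h
    have hmem : y ∈ S.Amax'.domain := by
      refine LinearPMap.mem_adjoint_domain_of_exists _ ⟨0, fun x => ?_⟩
      simp [h x]
    refine ⟨⟨y, hmem⟩, ?_, rfl⟩
    exact LinearPMap.adjoint_apply_eq S.dense_Amin ⟨y, hmem⟩ fun x => by simp [h x]

lemma isClosed_Zker' : IsClosed (S.Zker' : Set H) := by
  rw [S.coe_Zker']
  exact isClosed_iInter fun v =>
    isClosed_eq (Continuous.inner continuous_id continuous_const) continuous_const

/-- The orthogonal projection onto `Z = ker A_max`. -/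
def projZ : H →L[ℂ] H := projCl S.Zker S.isClosed_Zker

/-- The orthogonal projection onto `Z' = ker A'_max`. -/
def projZ' : H →L[ℂ] H := projCl S.Zker' S.isClosed_Zker'

variable (At : H →ₗ.[ℂ] H)

/-- `D(T) = {u_ζ : u ∈ D(Ã)}`, the set of nullspace components of elements of `D(Ã)`. -/
def dzeta : Set H := {x | ∃ u : S.Amax.domain, (u : H) ∈ At.domain ∧ x = S.uzeta u}

/-- `{v_{ζ'} : v ∈ D(Ã*)}`. -/
def dzeta' : Set H := {x | ∃ v : S.Amax'.domain, (v : H) ∈ At.adjoint.domain ∧ x = S.vzeta v}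

/-- `V := closure {u_ζ : u ∈ D(Ã)}`. -/
def Vsub : Submodule ℂ H := (Submodule.span ℂ (S.dzeta At)).topologicalClosure

/-- `W := closure {v_{ζ'} : v ∈ D(Ã*)}`. -/
def Wsub : Submodule ℂ H := (Submodule.span ℂ (S.dzeta' At)).topologicalClosure

lemma isClosed_Vsub : IsClosed ((S.Vsub At : Set H)) :=
  Submodule.isClosed_topologicalClosure _

lemma isClosed_Wsub : IsClosed ((S.Wsub At : Set H)) :=
  Submodule.isClosed_topologicalClosure _

/-- The orthogonal projection onto `V`. -/
def projV : H →L[ℂ] H := projCl (S.Vsub At) (S.isClosed_Vsub At)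

/-- The orthogonal projection onto `W`. -/
def projW : H →L[ℂ] H := projCl (S.Wsub At) (S.isClosed_Wsub At)

/-- The set `{(u_ζ, pr_W (A_max u)) : u ∈ D(Ã)}`, for a general closed subspace `W`. -/
def TgraphOn (W : Submodule ℂ H) (hW : IsClosed (W : Set H)) : Set (H × H) :=
  {p | ∃ u : S.Amax.domain, (u : H) ∈ At.domain ∧ p.1 = S.uzeta u ∧
    p.2 = projCl W hW (S.Amax u)}

/-- The graph of the operator `T : V → W` corresponding to `Ã`. -/
def Tgraph : Set (H × H) := S.TgraphOn At (S.Wsub At) (S.isClosed_Wsub At)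


/-- `F^λ := I - λ A_γ^{-1}`. -/
def Fop (lam : ℂ) : H →L[ℂ] H := ContinuousLinearMap.id ℂ H - lam • S.Agaminv

/-- `F'^{λ̄} := I - λ̄ (A_γ^*)^{-1}`. -/
def Fop' (lam : ℂ) : H →L[ℂ] H := ContinuousLinearMap.id ℂ H - (starRingEnd ℂ lam) • S.Agamstarinv

/-- `Z_λ := ker(A_max - λ)`, as a subset of `H`. -/
def ZkerL (lam : ℂ) : Set H :=
  {x | ∃ hx : x ∈ S.Amax.domain, S.Amax ⟨x, hx⟩ = lam • x}

/-- `Z'_{λ̄} := ker(A'_max - λ̄)`, as a subset of `H`. -/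
def ZkerL' (lam : ℂ) : Set H :=
  {x | ∃ hx : x ∈ S.Amax'.domain, S.Amax' ⟨x, hx⟩ = (starRingEnd ℂ lam) • x}

/-- `pr^λ_ζ u := u - (A_γ - λ)^{-1}(A_max - λ)u`, given the resolvent `R = (A_γ - λ)^{-1}`. -/
def uzetaL (lam : ℂ) (R : H →L[ℂ] H) (u : S.Amax.domain) : H :=
  (u : H) - R (S.Amax u - lam • (u : H))

/-- `pr^{λ̄}_{ζ'} v := v - (A_γ^* - λ̄)^{-1}(A'_max - λ̄)v`,
given the resolvent `R' = (A_γ^* - λ̄)^{-1}`. -/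
def vzetaL (lam : ℂ) (R' : H →L[ℂ] H) (v : S.Amax'.domain) : H :=
  (v : H) - R' (S.Amax' v - (starRingEnd ℂ lam) • (v : H))

/-- `D(T^λ) = {pr^λ_ζ u : u ∈ D(Ã)}`. -/
def dzetaL (lam : ℂ) (R : H →L[ℂ] H) : Set H :=
  {x | ∃ u : S.Amax.domain, (u : H) ∈ At.domain ∧ x = S.uzetaL lam R u}

/-- `{pr^{λ̄}_{ζ'} v : v ∈ D(Ã*)}`. -/
def dzetaL' (lam : ℂ) (R' : H →L[ℂ] H) : Set H :=
  {x | ∃ v : S.Amax'.domain, (v : H) ∈ At.adjoint.domain ∧ x = S.vzetaL lam R' v}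

/-- `V_λ := closure {pr^λ_ζ u : u ∈ D(Ã)}`. -/
def VLsub (lam : ℂ) (R : H →L[ℂ] H) : Submodule ℂ H :=
  (Submodule.span ℂ (S.dzetaL At lam R)).topologicalClosure

/-- `W_{λ̄} := closure {pr^{λ̄}_{ζ'} v : v ∈ D(Ã*)}`. -/
def WLsub (lam : ℂ) (R' : H →L[ℂ] H) : Submodule ℂ H :=
  (Submodule.span ℂ (S.dzetaL' At lam R')).topologicalClosure

lemma isClosed_WLsub (lam : ℂ) (R' : H →L[ℂ] H) : IsClosed ((S.WLsub At lam R' : Set H)) :=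
  Submodule.isClosed_topologicalClosure _

/-- The orthogonal projection onto `W_{λ̄}`. -/
def projWL (lam : ℂ) (R' : H →L[ℂ] H) : H →L[ℂ] H :=
  projCl (S.WLsub At lam R') (S.isClosed_WLsub At lam R')

/-- The graph of the operator `T^λ : V_λ → W_{λ̄}` corresponding to `Ã - λ`:
`{(pr^λ_ζ u, pr_{W_{λ̄}}((A_max - λ)u)) : u ∈ D(Ã)}`. -/
def TgraphL (lam : ℂ) (R R' : H →L[ℂ] H) : Set (H × H) :=
  {p | ∃ u : S.Amax.domain, (u : H) ∈ At.domain ∧ p.1 = S.uzetaL lam R u ∧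
    p.2 = S.projWL At lam R' (S.Amax u - lam • (u : H))}

/-- `G^λ_{V,W} x := -pr_W (λ E^λ x)`, where `W = W(Ã)`. -/
def Gval (lam : ℂ) (R : H →L[ℂ] H) (x : H) : H :=
  -(S.projW At (lam • Eop lam R x))

/-- `G^μ_{Z,Z} z := -pr_Z (μ E^μ z)`. -/
def GZval (lam : ℂ) (R : H →L[ℂ] H) (x : H) : H :=
  -(S.projZ (lam • Eop lam R x))

lemma mem_Amax_res {lam : ℂ} {Rt : H →L[ℂ] H} (h2 : At ≤ S.Amax)
    (hRt : IsResolvent At lam Rt) (w : H) :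
    S.Agaminv w - Rt (w - lam • S.Agaminv w) ∈ S.Amax.domain :=
  Submodule.sub_mem _ (S.Agam_le_max.1 (S.Agaminv_mem w)) (h2.1 (hRt.mem _))

/-- `M(λ) w := pr_ζ ((I - (Ã - λ)^{-1}(A_max - λ)) A_γ^{-1} w)`, the value of the abstract
`M`-function on `w`. -/
def Mval {lam : ℂ} {Rt : H →L[ℂ] H} (h2 : At ≤ S.Amax) (hRt : IsResolvent At lam Rt)
    (w : H) : H :=
  S.uzeta ⟨S.Agaminv w - Rt (w - lam • S.Agaminv w), S.mem_Amax_res At h2 hRt w⟩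

end Setup

lemma projCl_eq_zero {K : Submodule ℂ H} (hK : IsClosed (K : Set H)) {f : H}
    (hf : f ∈ Kᗮ) : projCl K hK f = 0 := by
  haveI : CompleteSpace K := hK.completeSpace_coe
  show ((K.orthogonalProjectionOnto f : K) : H) = 0
  rw [Submodule.orthogonalProjectionOnto_eq_zero_iff.mpr hf]
  rfl

lemma projCl_mem (K : Submodule ℂ H) (hK : IsClosed (K : Set H)) (f : H) :
    projCl K hK f ∈ K := by
  haveI : CompleteSpace K := hK.completeSpace_coe
  exact (K.orthogonalProjectionOnto f).2

theorem statement_2 (S : Setup H) (At : H →ₗ.[ℂ] H)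
    (h1 : S.Amin ≤ At) (h2 : At ≤ S.Amax)
    (hcl : IsClosed (At.graph : Set (H × H))) :
    (∀ u : S.Amax.domain, (u : H) ∈ At.domain → S.uzeta u = 0 →
      S.projW At (S.Amax u) = 0) ∧
    ∃ T : H →ₗ.[ℂ] H, (T.graph : Set (H × H)) = S.Tgraph At ∧
      (T.domain : Set H) = S.dzeta At ∧ ∀ x : T.domain, T x ∈ S.Wsub At := by
  have hdense : Dense (At.domain : Set H) := S.dense_Amin.mono h1.1
  have hdenseγ : Dense (S.Agam.domain : Set H) := S.dense_Amin.mono S.Amin_le_Agam.1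
  -- `Ã* ≤ A'_max` since `A_min ≤ Ã` (the adjoint is antitone).
  have hadj : At.adjoint ≤ S.Amax' := by
    have hAt := (LinearPMap.adjoint_isFormalAdjoint (T := At) hdense).symm
    have hform : S.Amin.IsFormalAdjoint At.adjoint := by
      intro x y
      have hx : (x : H) ∈ At.domain := h1.1 x.2
      have h1x : At ⟨(x : H), hx⟩ = S.Amin x := (h1.2 rfl).symm
      have := hAt ⟨(x : H), hx⟩ y
      rw [h1x] at this
      exact this
    exact hform.le_adjoint (hT := S.dense_Amin)
  -- Part 1: if `u_ζ = 0` then `pr_W (A_max u) = 0`.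
  have part1 : ∀ u : S.Amax.domain, (u : H) ∈ At.domain → S.uzeta u = 0 →
      S.projW At (S.Amax u) = 0 := by
    intro u hu hz
    have hzz : S.Agaminv (S.Amax u) = (u : H) := by
      have h := hz
      unfold Setup.uzeta at h
      rw [sub_eq_zero] at h
      exact h.symm
    have hgen : ∀ x ∈ S.dzeta' At, (inner ℂ (S.Amax u) x : ℂ) = 0 := by
      rintro _ ⟨v, hv, rfl⟩
      unfold Setup.vzeta
      rw [inner_sub_right]
      have e1 : (inner ℂ (S.Amax u) (v : H) : ℂ) = inner ℂ (u : H) (S.Amax' v) := by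
        have hformal := (LinearPMap.adjoint_isFormalAdjoint (T := At) hdense).symm
          ⟨(u : H), hu⟩ ⟨(v : H), hv⟩
        have hAtu : At ⟨(u : H), hu⟩ = S.Amax u := h2.2 rfl
        have hAv : At.adjoint ⟨(v : H), hv⟩ = S.Amax' v := hadj.2 rfl
        rw [hAtu, hAv] at hformal
        exact hformal
      have e2 : (inner ℂ (S.Amax u) (S.Agamstarinv (S.Amax' v)) : ℂ)
          = inner ℂ (u : H) (S.Amax' v) := by
        have hformalγ := (LinearPMap.adjoint_isFormalAdjoint (T := S.Agam) hdenseγ).symm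
          ⟨S.Agaminv (S.Amax u), S.Agaminv_mem _⟩
          ⟨S.Agamstarinv (S.Amax' v), S.Agamstarinv_mem _⟩
        rw [S.Agaminv_right, S.Agamstarinv_right] at hformalγ
        have e2' : (inner ℂ (S.Amax u) (S.Agamstarinv (S.Amax' v)) : ℂ)
            = inner ℂ (S.Agaminv (S.Amax u)) ((S.Amax' v : H)) := hformalγ
        rw [e2', hzz]
      rw [e1, e2, sub_self]
    have horth : (S.Amax u : H) ∈ (S.Wsub At)ᗮ := by
      have hle : S.Wsub At ≤ LinearMap.ker (innerSL ℂ (S.Amax u) : H →ₗ[ℂ] ℂ) := by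
        apply Submodule.topologicalClosure_minimal
        · rw [Submodule.span_le]
          intro x hx
          simpa using hgen x hx
        · exact ContinuousLinearMap.isClosed_ker (innerSL ℂ (S.Amax u))
      rw [Submodule.mem_orthogonal']
      intro y hy
      simpa using hle hy
    exact projCl_eq_zero _ horth
  refine ⟨part1, ?_⟩
  -- The linear map `u ↦ (u_ζ, pr_W (A_max u))` on `D(A_max)`.
  let L : S.Amax.domain →ₗ[ℂ] H × H :=
    { toFun := fun u => (S.uzeta u, S.projW At (S.Amax u))
      map_add' := fun a b => by
        simp only [Setup.uzeta, LinearPMap.map_add, map_add, Submodule.coe_add,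
          Prod.mk_add_mk, Prod.mk.injEq]
        exact ⟨by abel, trivial⟩
      map_smul' := fun c a => by
        simp only [Setup.uzeta, LinearPMap.map_smul, map_smul, Submodule.coe_smul,
          Prod.smul_mk, Prod.mk.injEq, RingHom.id_apply]
        exact ⟨by rw [smul_sub], trivial⟩ }
  let D' : Submodule ℂ S.Amax.domain := At.domain.comap S.Amax.domain.subtype
  let G : Submodule ℂ (H × H) := D'.map L
  have hGmem : ∀ p : H × H, p ∈ G ↔ ∃ u : S.Amax.domain, (u : H) ∈ At.domain ∧
      p.1 = S.uzeta u ∧ p.2 = S.projW At (S.Amax u) := by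
    intro p
    constructor
    · rintro ⟨u, hu, rfl⟩
      exact ⟨u, hu, rfl, rfl⟩
    · rintro ⟨u, hu, h1', h2'⟩
      exact ⟨u, hu, by rw [Prod.ext_iff]; exact ⟨h1'.symm, h2'.symm⟩⟩
  have hsingle : ∀ x : H × H, x ∈ G → x.1 = 0 → x.2 = 0 := by
    intro x hx hx1
    obtain ⟨u, hu, h1', h2'⟩ := (hGmem x).1 hx
    rw [h2']
    exact part1 u hu (by rw [← h1', hx1])
  refine ⟨G.toLinearPMap, ?_, ?_, ?_⟩
  · rw [Submodule.toLinearPMap_graph_eq G hsingle]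
    ext p
    rw [SetLike.mem_coe, hGmem]
    constructor
    · rintro ⟨u, hu, h1', h2'⟩
      exact ⟨u, hu, h1', h2'⟩
    · rintro ⟨u, hu, h1', h2'⟩
      exact ⟨u, hu, h1', h2'⟩
  · ext x
    constructor
    · rintro ⟨⟨px, py⟩, hp, rfl⟩
      obtain ⟨u, hu, h1', _⟩ := (hGmem _).1 hp
      exact ⟨u, hu, h1'⟩
    · rintro ⟨u, hu, hx⟩
      exact ⟨(S.uzeta u, S.projW At (S.Amax u)), (hGmem _).2 ⟨u, hu, rfl, rfl⟩, hx.symm⟩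
  · intro x
    have hx := Submodule.mem_graph_toLinearPMap hsingle x
    obtain ⟨u, hu, h1', h2'⟩ := (hGmem _).1 hx
    have h2'' : (G.toLinearPMap x : H) = S.projW At (S.Amax u) := h2'
    rw [h2'']
    exact projCl_mem _ _ _

end GrubbExt
end
end

section
/- (Theorem 5.1, adjoint.) Let Ã ∈ M be closed, corresponding to T : V → W. Then the adjoint Ã* satisfies A'_min ⊂ Ã* ⊂ A'_max and D(Ã*) = {v ∈ D(A'_max) : v_{ζ'} ∈ D(T*) and pr_V(A'_max v) = T* v_{ζ'}}, where T* : D(T*) ⊂ W → V is the Hilbert-space adjoint of T regarded as a densely defined operator from the Hilbert space V to the Hilbert space W. -/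
noncomputable section

open Filter Topology

namespace GrubbExt

variable {H : Type*} [NormedAddCommGroup H] [InnerProductSpace ℂ H] [CompleteSpace H]

lemma inner_projCl_right (K : Submodule ℂ H) (hK : IsClosed (K : Set H)) (x z : H)
    (hz : z ∈ K) : (inner ℂ z (projCl K hK x) : ℂ) = inner ℂ z x := by
  haveI : CompleteSpace K := hK.completeSpace_coe
  have h0 : (inner ℂ z (x - (K.orthogonalProjectionOnto x : H)) : ℂ) = 0 :=
    (Submodule.mem_orthogonal K _).1 (K.sub_starProjection_mem_orthogonal x) z hz
  rw [inner_sub_right, sub_eq_zero] at h0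
  exact h0.symm

lemma inner_projCl_left (K : Submodule ℂ H) (hK : IsClosed (K : Set H)) (x z : H)
    (hz : z ∈ K) : (inner ℂ (projCl K hK x) z : ℂ) = inner ℂ x z := by
  rw [← inner_conj_symm, inner_projCl_right K hK x z hz, inner_conj_symm]

namespace Setup

variable (S : Setup H)

lemma dense_Agam_domain : Dense (S.Agam.domain : Set H) :=
  S.dense_Amin.mono S.Amin_le_Agam.1

lemma inner_Agaminv (f g : H) :
    (inner ℂ (S.Agaminv f) g : ℂ) = inner ℂ f (S.Agamstarinv g) := by
  have fa := LinearPMap.adjoint_isFormalAdjoint S.dense_Agam_domain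
      (⟨S.Agamstarinv g, S.Agamstarinv_mem g⟩ : S.Agam.adjoint.domain)
      (⟨S.Agaminv f, S.Agaminv_mem f⟩ : S.Agam.domain)
  rw [S.Agamstarinv_right, S.Agaminv_right] at fa
  -- fa : ⟪g, Agaminv f⟫ = ⟪Agamstarinv g, f⟫
  rw [← inner_conj_symm, fa, inner_conj_symm]

lemma key_identity (u : S.Amax.domain) (v : S.Amax'.domain) :
    (inner ℂ ((S.Amax u : H)) (S.vzeta v) : ℂ) - inner ℂ (S.uzeta u) ((S.Amax' v : H))
      = inner ℂ ((S.Amax u : H)) ((v : H)) - inner ℂ ((u : H)) ((S.Amax' v : H)) := by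
  simp only [vzeta, uzeta, inner_sub_left, inner_sub_right, S.inner_Agaminv]
  ring

lemma uzeta_mem_Vsub (At : H →ₗ.[ℂ] H) (u : S.Amax.domain) (hu : (u : H) ∈ At.domain) :
    S.uzeta u ∈ S.Vsub At :=
  Submodule.le_topologicalClosure _ (Submodule.subset_span ⟨u, hu, rfl⟩)

lemma vzeta_mem_Wsub (At : H →ₗ.[ℂ] H) (v : S.Amax'.domain)
    (hv : (v : H) ∈ At.adjoint.domain) : S.vzeta v ∈ S.Wsub At :=
  Submodule.le_topologicalClosure _ (Submodule.subset_span ⟨v, hv, rfl⟩)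

end Setup

theorem statement_5 (S : Setup H) (At : H →ₗ.[ℂ] H)
    (h1 : S.Amin ≤ At) (h2 : At ≤ S.Amax)
    (hcl : IsClosed (At.graph : Set (H × H)))
    (T : H →ₗ.[ℂ] H) (hT : (T.graph : Set (H × H)) = S.Tgraph At) :
    S.Amin' ≤ At.adjoint ∧ At.adjoint ≤ S.Amax' ∧
    ∀ v : S.Amax'.domain,
      ((v : H) ∈ At.adjoint.domain ↔
        S.vzeta v ∈ S.Wsub At ∧
          ∀ p : H × H, p ∈ T.graph →
            (inner ℂ p.2 (S.vzeta v) : ℂ) = (inner ℂ p.1 (S.projV At (S.Amax' v)) : ℂ)) := by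
  -- density of domains
  have denseAt : Dense (At.domain : Set H) := S.dense_Amin.mono h1.1
  have fat := LinearPMap.adjoint_isFormalAdjoint denseAt
  -- Part 1 : A'_min ≤ At†
  have fa_max := LinearPMap.adjoint_isFormalAdjoint S.dense_Amin'
  have fAt : At.IsFormalAdjoint S.Amin' := fun x y => by
    have hx : (x : H) ∈ S.Amax.domain := h2.1 x.2
    have hval0 : At x = S.Amax ⟨(x : H), hx⟩ := h2.2 (y := ⟨(x : H), hx⟩) rfl
    rw [hval0]
    exact fa_max ⟨(x : H), hx⟩ y
  have part1 : S.Amin' ≤ At.adjoint := fAt.le_adjoint denseAt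
  -- Part 2 : At† ≤ A'_max
  have hsub : ∀ y ∈ At.adjoint.domain, y ∈ S.Amax'.domain := by
    intro y hy
    apply LinearPMap.mem_adjoint_domain_of_exists
    refine ⟨At.adjoint ⟨y, hy⟩, fun x => ?_⟩
    have hfa := fat ⟨y, hy⟩ ⟨(x : H), h1.1 x.2⟩
    rwa [← h1.2 (show ((x : H)) = ((⟨(x : H), h1.1 x.2⟩ : At.domain) : H) from rfl)] at hfa
  have hval : ∀ (y : At.adjoint.domain) (hy' : (y : H) ∈ S.Amax'.domain),
      S.Amax' ⟨(y : H), hy'⟩ = At.adjoint y := by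
    intro y hy'
    refine LinearPMap.adjoint_apply_eq S.dense_Amin ⟨(y : H), hy'⟩ (fun x => ?_)
    have hfa := fat y ⟨(x : H), h1.1 x.2⟩
    rwa [← h1.2 (show ((x : H)) = ((⟨(x : H), h1.1 x.2⟩ : At.domain) : H) from rfl)] at hfa
  have part2 : At.adjoint ≤ S.Amax' := by
    refine ⟨fun y hy => hsub y hy, fun x y hxy => ?_⟩
    have hx' : (x : H) ∈ S.Amax'.domain := by rw [hxy]; exact y.2
    have h := hval x hx'
    rw [← h]
    exact congrArg _ (Subtype.ext hxy)
  refine ⟨part1, part2, fun v => ?_⟩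
  constructor
  · intro hv
    have hAdv : At.adjoint ⟨(v : H), hv⟩ = S.Amax' v := (hval ⟨(v : H), hv⟩ v.2).symm
    refine ⟨S.vzeta_mem_Wsub At v hv, fun p hp => ?_⟩
    have hp' : p ∈ (T.graph : Set (H × H)) := hp
    rw [hT] at hp'
    obtain ⟨u, hu, hp1, hp2⟩ := hp'

    rw [hp1, hp2]
    have hWv : S.vzeta v ∈ S.Wsub At := S.vzeta_mem_Wsub At v hv
    have hVu : S.uzeta u ∈ S.Vsub At := S.uzeta_mem_Vsub At u hu
    rw [show S.projV At ((S.Amax' v : H)) = projCl (S.Vsub At) (S.isClosed_Vsub At)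
        ((S.Amax' v : H)) from rfl,
      inner_projCl_left _ _ _ _ hWv, inner_projCl_right _ _ _ _ hVu]
    -- goal : ⟪Amax u, vzeta v⟫ = ⟪uzeta u, Amax' v⟫
    have hAtu : S.Amax u = At ⟨(u : H), hu⟩ :=
      (h2.2 (rfl : ((⟨(u : H), hu⟩ : At.domain) : H) = (u : H))).symm
    have hfa := fat ⟨(v : H), hv⟩ ⟨(u : H), hu⟩
    rw [hAdv, ← hAtu] at hfa
    -- hfa : ⟪Amax' v, ↑u⟫ = ⟪↑v, Amax u⟫
    have hcomm : (inner ℂ ((S.Amax u : H)) ((v : H)) : ℂ)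
        = inner ℂ ((u : H)) ((S.Amax' v : H)) := by
      rw [← inner_conj_symm, ← hfa, inner_conj_symm]
    have hk := S.key_identity u v
    rw [hcomm, sub_self, sub_eq_zero] at hk
    exact hk
  · rintro ⟨hWv, hin⟩
    apply LinearPMap.mem_adjoint_domain_of_exists
    refine ⟨(S.Amax' v : H), fun x => ?_⟩
    set u : S.Amax.domain := ⟨(x : H), h2.1 x.2⟩ with hu_def
    have hp : ((S.uzeta u, S.projW At ((S.Amax u : H))) : H × H)
        ∈ (T.graph : Set (H × H)) := by
      rw [hT]
      exact ⟨u, x.2, rfl, rfl⟩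
    have h := hin _ hp
    simp only at h
    rw [show S.projW At ((S.Amax u : H)) = projCl (S.Wsub At) (S.isClosed_Wsub At)
        ((S.Amax u : H)) from rfl,
      show S.projV At ((S.Amax' v : H)) = projCl (S.Vsub At) (S.isClosed_Vsub At)
        ((S.Amax' v : H)) from rfl,
      inner_projCl_left _ _ _ _ hWv,
      inner_projCl_right _ _ _ _ (S.uzeta_mem_Vsub At u x.2)] at h
    have hk := S.key_identity u v
    rw [h, sub_self] at hk
    have hcomm : (inner ℂ ((S.Amax u : H)) ((v : H)) : ℂ)
        = inner ℂ ((u : H)) ((S.Amax' v : H)) := by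
      have := hk.symm
      rwa [sub_eq_zero] at this
    have hAtu : S.Amax u = At x := (h2.2 (rfl : ((x : H)) = ((u : H)))).symm
    rw [hAtu] at hcomm
    -- hcomm : ⟪At x, v⟫ = ⟪↑x, Amax' v⟫   (note ↑u = ↑x)
    rw [← inner_conj_symm, ← hcomm, inner_conj_symm]


end GrubbExt
end
end

section
/- (Corollary 5.2, kernel and range.) Let Ã ∈ M be closed and λ ∈ ρ(A_γ). Then ker(Ã − λ) = ker T^λ and ran(Ã − λ) = ran T^λ + (H ⊖ W_{λ̄}), where H ⊖ W_{λ̄} is the orthogonal complement of W_{λ̄} in H. In particular, Ã − λ : D(Ã) → H is bijective if and only if T^λ : D(T^λ) → W_{λ̄} is bijective. -/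
noncomputable section

open Filter Topology

namespace GrubbExt

variable {H : Type*} [NormedAddCommGroup H] [InnerProductSpace ℂ H] [CompleteSpace H]

section Aux

local notation "⟪" x ", " y "⟫" => @inner ℂ _ _ x y

variable {S : Setup H} {At : H →ₗ.[ℂ] H} {lam : ℂ} {Rg R' : H →L[ℂ] H}

/-- von Neumann: a closed densely defined operator equals its double adjoint (membership form). -/
lemma mem_graph_of_forall_adjoint {T : H →ₗ.[ℂ] H} (hd : Dense (T.domain : Set H))
    (hcl : IsClosed (T.graph : Set (H × H))) {u w : H}
    (h : ∀ v : T.adjoint.domain, ⟪u, T.adjoint v⟫ = ⟪w, (v : H)⟫) :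
    (u, w) ∈ T.graph := by
  set e := WithLp.linearEquiv 2 ℂ (H × H) with he
  set G : Submodule ℂ (WithLp 2 (H × H)) :=
    T.graph.comap (e : WithLp 2 (H × H) →ₗ[ℂ] H × H) with hG
  have hGcl : IsClosed (G : Set (WithLp 2 (H × H))) := by
    have : (G : Set (WithLp 2 (H × H))) =
        (WithLp.prodContinuousLinearEquiv 2 ℂ H H) ⁻¹' (T.graph : Set (H × H)) := rfl
    rw [this]
    exact hcl.preimage (WithLp.prodContinuousLinearEquiv 2 ℂ H H).continuous
  haveI : CompleteSpace G := hGcl.completeSpace_coe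
  have key : e.symm (u, w) ∈ Gᗮᗮ := by
    rw [Submodule.mem_orthogonal]
    intro p hp
    set a := (e p).1 with ha'
    set b := (e p).2 with hb'
    have hpx : ∀ x : T.domain, ⟪(x : H), a⟫ + ⟪T x, b⟫ = 0 := by
      intro x
      have hxG : e.symm ((x : H), T x) ∈ G := by
        rw [hG, Submodule.mem_comap]
        simpa using T.mem_graph x
      have := hp _ hxG
      simpa [WithLp.prod_inner_apply, ha', hb', he] using this
    have hbadj : ∀ x : T.domain, ⟪-a, (x : H)⟫ = ⟪b, T x⟫ := by
      intro x
      have h1 := congrArg (starRingEnd ℂ) (hpx x)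
      simp only [map_add, inner_conj_symm, map_zero] at h1
      rw [inner_neg_left]
      linear_combination -h1
    have hb : b ∈ T.adjoint.domain :=
      LinearPMap.mem_adjoint_domain_of_exists b ⟨-a, hbadj⟩
    have hval : T.adjoint ⟨b, hb⟩ = -a := LinearPMap.adjoint_apply_eq hd ⟨b, hb⟩ hbadj
    have hcomp := h ⟨b, hb⟩
    rw [hval] at hcomp
    have h2 := congrArg (starRingEnd ℂ) hcomp
    simp only [inner_conj_symm] at h2
    rw [inner_neg_left] at h2
    have : ⟪a, u⟫ + ⟪b, w⟫ = 0 := by linear_combination -h2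
    simpa [WithLp.prod_inner_apply, ha', hb', he] using this
  rw [Submodule.orthogonal_orthogonal, hG, Submodule.mem_comap, LinearEquiv.coe_coe,
    LinearEquiv.apply_symm_apply] at key
  exact key

lemma adjoint_le_Amax' (h1 : S.Amin ≤ At) (v : At.adjoint.domain) :
    ∃ hv : (v : H) ∈ S.Amax'.domain, S.Amax' ⟨(v : H), hv⟩ = At.adjoint v := by
  have hdAt : Dense (At.domain : Set H) := Dense.mono h1.1 S.dense_Amin
  have fa := LinearPMap.adjoint_isFormalAdjoint hdAt
  have hkey : ∀ x : S.Amin.domain, ⟪At.adjoint v, (x : H)⟫ = ⟪(v : H), S.Amin x⟫ := by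
    intro x
    have hx' : (x : H) ∈ At.domain := h1.1 x.2
    have hfa := fa v ⟨(x : H), hx'⟩
    rwa [← h1.2 (x := x) (y := ⟨(x : H), hx'⟩) rfl] at hfa
  have hv : (v : H) ∈ S.Amin.adjoint.domain :=
    LinearPMap.mem_adjoint_domain_of_exists _ ⟨At.adjoint v, hkey⟩
  exact ⟨hv, LinearPMap.adjoint_apply_eq S.dense_Amin ⟨(v : H), hv⟩ hkey⟩

lemma res_adjoint (hRg : IsResolvent S.Agam lam Rg)
    (hR' : IsResolvent S.Agam.adjoint (starRingEnd ℂ lam) R') (a b : H) :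
    ⟪Rg a, b⟫ = ⟪a, R' b⟫ := by
  have hdAg : Dense (S.Agam.domain : Set H) := Dense.mono S.Amin_le_Agam.1 S.dense_Amin
  have fa := LinearPMap.adjoint_isFormalAdjoint hdAg
  have hv2 := hR'.right b
  have hu2 := hRg.right a
  have hfa := fa ⟨R' b, hR'.mem b⟩ ⟨Rg a, hRg.mem a⟩
  have hfc := congrArg (starRingEnd ℂ) hfa
  simp only [inner_conj_symm] at hfc
  calc ⟪Rg a, b⟫
      = ⟪Rg a, S.Agam.adjoint ⟨R' b, hR'.mem b⟩ - (starRingEnd ℂ lam) • (R' b)⟫ := by rw [hv2]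
    _ = ⟪Rg a, S.Agam.adjoint ⟨R' b, hR'.mem b⟩⟫ - (starRingEnd ℂ lam) * ⟪Rg a, R' b⟫ := by
        rw [inner_sub_right, inner_smul_right]
    _ = ⟪S.Agam ⟨Rg a, hRg.mem a⟩, R' b⟫ - ⟪lam • Rg a, R' b⟫ := by
        rw [hfc, inner_smul_left]
    _ = ⟪S.Agam ⟨Rg a, hRg.mem a⟩ - lam • Rg a, R' b⟫ := by rw [inner_sub_left]
    _ = ⟪a, R' b⟫ := by rw [hu2]

lemma key_surj (h1 : S.Amin ≤ At) (h2 : At ≤ S.Amax)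
    (hcl : IsClosed (At.graph : Set (H × H)))
    (hRg : IsResolvent S.Agam lam Rg)
    (hR' : IsResolvent S.Agam.adjoint (starRingEnd ℂ lam) R')
    {h : H} (hh : h ∈ (S.WLsub At lam R')ᗮ) :
    ∃ hm : Rg h ∈ At.domain, At ⟨Rg h, hm⟩ = h + lam • Rg h := by
  have hdAt : Dense (At.domain : Set H) := Dense.mono h1.1 S.dense_Amin
  have hmain : ∀ v : At.adjoint.domain,
      ⟪Rg h, At.adjoint v⟫ = ⟪h + lam • Rg h, (v : H)⟫ := by
    intro v
    obtain ⟨hv, hval⟩ := adjoint_le_Amax' h1 v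
    have hmemW : S.vzetaL lam R' ⟨(v : H), hv⟩ ∈ S.WLsub At lam R' :=
      Submodule.le_topologicalClosure _
        (Submodule.subset_span ⟨⟨(v : H), hv⟩, v.2, rfl⟩)
    have horth : ⟪S.vzetaL lam R' ⟨(v : H), hv⟩, h⟫ = 0 :=
      (Submodule.mem_orthogonal _ h).mp hh _ hmemW
    set k : H := At.adjoint v - (starRingEnd ℂ lam) • (v : H) with hk
    have hvz : S.vzetaL lam R' ⟨(v : H), hv⟩ = (v : H) - R' k := by
      rw [Setup.vzetaL, hval]
    rw [hvz, inner_sub_left] at horth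
    have hoc := congrArg (starRingEnd ℂ) horth
    simp only [map_sub, inner_conj_symm, map_zero] at hoc
    have hra := res_adjoint hRg hR' h k
    have hexp : At.adjoint v = k + (starRingEnd ℂ lam) • (v : H) := by rw [hk]; abel
    rw [hexp, inner_add_right, inner_smul_right, inner_add_left, inner_smul_left, hra]
    linear_combination -hoc
  have hg := mem_graph_of_forall_adjoint hdAt hcl hmain
  rw [LinearPMap.mem_graph_iff] at hg
  obtain ⟨y, hy1, hy2⟩ := hg
  have hy1' : (y : H) = Rg h := hy1
  refine ⟨hy1' ▸ y.2, ?_⟩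
  rw [show (⟨Rg h, hy1' ▸ y.2⟩ : At.domain) = y from Subtype.ext hy1'.symm]
  exact hy2

end Aux

theorem statement_11 (S : Setup H) (At : H →ₗ.[ℂ] H)
    (h1 : S.Amin ≤ At) (h2 : At ≤ S.Amax)
    (hcl : IsClosed (At.graph : Set (H × H)))
    (lam : ℂ) (Rg R' : H →L[ℂ] H)
    (hRg : IsResolvent S.Agam lam Rg)
    (hR' : IsResolvent S.Agam.adjoint (starRingEnd ℂ lam) R') :
    {x : H | ∃ hx : x ∈ At.domain, At ⟨x, hx⟩ = lam • x} =
      {x : H | (x, (0 : H)) ∈ S.TgraphL At lam Rg R'} ∧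
    {f : H | ∃ u : At.domain, At u - lam • (u : H) = f} =
      {f : H | ∃ y g : H, (∃ x : H, (x, y) ∈ S.TgraphL At lam Rg R') ∧
        g ∈ (S.WLsub At lam R')ᗮ ∧ f = y + g} ∧
    ((∀ f : H, ∃! u : At.domain, At u - lam • (u : H) = f) ↔
      ∀ w : H, w ∈ S.WLsub At lam R' →
        ∃! x : H, (x, w) ∈ S.TgraphL At lam Rg R') := by
  haveI : CompleteSpace (S.WLsub At lam R') := (S.isClosed_WLsub At lam R').completeSpace_coe
  set W := S.WLsub At lam R' with hWdef
  have hproj_mem : ∀ f : H, S.projWL At lam R' f ∈ W := fun f =>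
    (W.orthogonalProjectionOnto f).2
  have hsubmem : ∀ f : H, f - S.projWL At lam R' f ∈ Wᗮ := fun f =>
    W.sub_starProjection_mem_orthogonal f
  have hzero : ∀ f : H, S.projWL At lam R' f = 0 ↔ f ∈ Wᗮ := fun f => by
    rw [show S.projWL At lam R' f = ((W.orthogonalProjectionOnto f : W) : H) from rfl,
      ZeroMemClass.coe_eq_zero, Submodule.orthogonalProjectionOnto_eq_zero_iff]
  -- Part 1 : kernels agree
  have hpart1 : {x : H | ∃ hx : x ∈ At.domain, At ⟨x, hx⟩ = lam • x} =
      {x : H | (x, (0 : H)) ∈ S.TgraphL At lam Rg R'} := by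
    ext x
    simp only [Set.mem_setOf_eq]
    constructor
    · rintro ⟨hx, hval⟩
      have hA : S.Amax ⟨x, h2.1 hx⟩ = lam • x := by
        rw [← h2.2 (x := ⟨x, hx⟩) (y := ⟨x, h2.1 hx⟩) rfl]; exact hval
      refine ⟨⟨x, h2.1 hx⟩, hx, ?_, ?_⟩
      · show x = S.uzetaL lam Rg ⟨x, h2.1 hx⟩
        rw [Setup.uzetaL, hA, sub_self, map_zero, sub_zero]
      · show (0 : H) = S.projWL At lam R' (S.Amax ⟨x, h2.1 hx⟩ - lam • x)
        rw [hA, sub_self, map_zero]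
    · rintro ⟨u, hu, hx, h0⟩
      have h0' : S.projWL At lam R' (S.Amax u - lam • (u : H)) = 0 := h0.symm
      have hfW : S.Amax u - lam • (u : H) ∈ Wᗮ := (hzero _).mp h0'
      obtain ⟨hm, hvalk⟩ := key_surj h1 h2 hcl hRg hR' hfW
      have hxe : x = (u : H) - Rg (S.Amax u - lam • (u : H)) := hx
      have hmem : x ∈ At.domain := by
        rw [hxe]; exact At.domain.sub_mem hu hm
      refine ⟨hmem, ?_⟩
      have hsplit : (⟨x, hmem⟩ : At.domain)
          = ⟨(u : H), hu⟩ - ⟨Rg (S.Amax u - lam • (u : H)), hm⟩ := by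
        apply Subtype.ext
        simpa using hxe
      have hAtu : At ⟨(u : H), hu⟩ = S.Amax u := h2.2 rfl
      rw [hsplit, LinearPMap.map_sub, hAtu, hvalk, hxe, smul_sub]
      abel
  -- Part 2 : ranges agree
  have hpart2 : {f : H | ∃ u : At.domain, At u - lam • (u : H) = f} =
      {f : H | ∃ y g : H, (∃ x : H, (x, y) ∈ S.TgraphL At lam Rg R') ∧
        g ∈ Wᗮ ∧ f = y + g} := by
    ext f
    simp only [Set.mem_setOf_eq]
    constructor
    · rintro ⟨u, hu⟩
      have hAtu : S.Amax ⟨(u : H), h2.1 u.2⟩ - lam • ((u : H)) = f := by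
        rw [← h2.2 (x := u) (y := ⟨(u : H), h2.1 u.2⟩) rfl]; exact hu
      refine ⟨S.projWL At lam R' f, f - S.projWL At lam R' f,
        ⟨S.uzetaL lam Rg ⟨(u : H), h2.1 u.2⟩,
          ⟨(u : H), h2.1 u.2⟩, u.2, rfl, ?_⟩, hsubmem f, by abel⟩
      show S.projWL At lam R' f
          = S.projWL At lam R' (S.Amax ⟨(u : H), h2.1 u.2⟩ - lam • ((u : H)))
      rw [hAtu]
    · rintro ⟨y, g, ⟨x, u, hu, hx, hy⟩, hg, hf⟩
      have hy' : y = S.projWL At lam R' (S.Amax u - lam • (u : H)) := hy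
      have hg' : (S.Amax u - lam • (u : H)) - y ∈ Wᗮ := by
        rw [hy']; exact hsubmem _
      have hsum : g - ((S.Amax u - lam • (u : H)) - y) ∈ Wᗮ := Submodule.sub_mem _ hg hg'
      obtain ⟨hm, hvalk⟩ := key_surj h1 h2 hcl hRg hR' hsum
      refine ⟨⟨(u : H), hu⟩ + ⟨Rg (g - ((S.Amax u - lam • (u : H)) - y)), hm⟩, ?_⟩
      have hcadd : ((⟨(u : H), hu⟩ + ⟨Rg (g - ((S.Amax u - lam • (u : H)) - y)), hm⟩ :
          At.domain) : H) = (u : H) + Rg (g - ((S.Amax u - lam • (u : H)) - y)) := rfl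
      rw [LinearPMap.map_add, h2.2 (x := ⟨(u : H), hu⟩) (y := u) rfl, hvalk, hf, hcadd,
        smul_add]
      abel
  refine ⟨hpart1, hpart2, ?_⟩
  -- (0,0) is in the graph of T^λ
  have hzmem : ((0 : H), (0 : H)) ∈ S.TgraphL At lam Rg R' := by
    refine ⟨0, At.domain.zero_mem, ?_, ?_⟩
    · show (0 : H) = S.uzetaL lam Rg 0
      rw [Setup.uzetaL]
      simp [LinearPMap.map_zero]
    · show (0 : H) = S.projWL At lam R' (S.Amax 0 - lam • ((0 : S.Amax.domain) : H))
      simp [LinearPMap.map_zero]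
  constructor
  · -- bijectivity of Ã - λ implies bijectivity of T^λ
    intro hbij w hw
    have huniq : ∀ x₁ x₂ : H, (x₁, w) ∈ S.TgraphL At lam Rg R' →
        (x₂, w) ∈ S.TgraphL At lam Rg R' → x₁ = x₂ := by
      intro x₁ x₂ hm1 hm2
      obtain ⟨u₁, hu₁, hx₁, hy₁⟩ := hm1
      obtain ⟨u₂, hu₂, hx₂, hy₂⟩ := hm2
      have hcoe : ((u₁ - u₂ : S.Amax.domain) : H) = (u₁ : H) - (u₂ : H) := rfl
      have harg : S.Amax u₁ - S.Amax u₂ - lam • ((u₁ : H) - (u₂ : H))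
          = (S.Amax u₁ - lam • (u₁ : H)) - (S.Amax u₂ - lam • (u₂ : H)) := by
        rw [smul_sub]; abel
      have hd : (x₁ - x₂, (0 : H)) ∈ S.TgraphL At lam Rg R' := by
        refine ⟨u₁ - u₂, ?_, ?_, ?_⟩
        · show ((u₁ - u₂ : S.Amax.domain) : H) ∈ At.domain
          rw [hcoe]; exact At.domain.sub_mem hu₁ hu₂
        · show x₁ - x₂ = S.uzetaL lam Rg (u₁ - u₂)
          have e1 : x₁ = (u₁ : H) - Rg (S.Amax u₁ - lam • (u₁ : H)) := hx₁
          have e2 : x₂ = (u₂ : H) - Rg (S.Amax u₂ - lam • (u₂ : H)) := hx₂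
          show x₁ - x₂ = ((u₁ - u₂ : S.Amax.domain) : H)
              - Rg (S.Amax (u₁ - u₂) - lam • ((u₁ - u₂ : S.Amax.domain) : H))
          rw [LinearPMap.map_sub, hcoe, harg, map_sub, e1, e2]
          abel
        · show (0 : H) = S.projWL At lam R'
            (S.Amax (u₁ - u₂) - lam • ((u₁ - u₂ : S.Amax.domain) : H))
          have hyy₁ : w = S.projWL At lam R' (S.Amax u₁ - lam • (u₁ : H)) := hy₁
          have hyy₂ : w = S.projWL At lam R' (S.Amax u₂ - lam • (u₂ : H)) := hy₂
          rw [LinearPMap.map_sub, hcoe, harg, map_sub, ← hyy₁, ← hyy₂, sub_self]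
      have hker : x₁ - x₂ ∈ {x : H | ∃ hx : x ∈ At.domain, At ⟨x, hx⟩ = lam • x} := by
        rw [hpart1]; exact hd
      obtain ⟨hmd, hvd⟩ := hker
      have h0' : At ⟨x₁ - x₂, hmd⟩ - lam • (x₁ - x₂) = 0 := by rw [hvd]; abel
      have hz : At (0 : At.domain) - lam • ((0 : At.domain) : H) = 0 := by
        simp [LinearPMap.map_zero]
      have he := (hbij 0).unique h0' hz
      have : x₁ - x₂ = 0 := by simpa using Subtype.ext_iff.mp he
      exact sub_eq_zero.mp this
    obtain ⟨u, hu⟩ := (hbij w).exists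
    have hw2 : w ∈ {f : H | ∃ y g : H, (∃ x : H, (x, y) ∈ S.TgraphL At lam Rg R') ∧
        g ∈ Wᗮ ∧ f = y + g} := by
      rw [← hpart2]; exact ⟨u, hu⟩
    obtain ⟨y, g, ⟨x, hxy⟩, hg, hwe⟩ := hw2
    obtain ⟨u', hu', hx', hy'⟩ := hxy
    have hyW : y ∈ W := by
      have hy'' : y = S.projWL At lam R' (S.Amax u' - lam • (u' : H)) := hy'
      rw [hy'']; exact hproj_mem _
    have hg0 : g = 0 := by
      have hgW : g ∈ W := by
        have : g = w - y := by rw [hwe]; abel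
        rw [this]; exact Submodule.sub_mem _ hw hyW
      exact (Submodule.disjoint_def.mp W.orthogonal_disjoint) g hgW hg
    have hwy : w = y := by rw [hwe, hg0, add_zero]
    have hxw : (x, w) ∈ S.TgraphL At lam Rg R' := by
      rw [hwy]; exact ⟨u', hu', hx', hy'⟩
    exact ⟨x, hxw, fun x₂ hx₂ => huniq x₂ x hx₂ hxw⟩
  · -- bijectivity of T^λ implies bijectivity of Ã - λ
    intro hT f
    have hyW : S.projWL At lam R' f ∈ W := hproj_mem f
    obtain ⟨x, hx, -⟩ := hT _ hyW
    have hfmem : f ∈ {f : H | ∃ u : At.domain, At u - lam • (u : H) = f} := by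
      rw [hpart2]
      exact ⟨S.projWL At lam R' f, f - S.projWL At lam R' f, ⟨x, hx⟩, hsubmem f, by abel⟩
    obtain ⟨u, hu⟩ := hfmem
    refine ⟨u, hu, ?_⟩
    intro u' hu'
    have hcoe : ((u' - u : At.domain) : H) = (u' : H) - (u : H) := rfl
    have hd0 : At (u' - u) - lam • ((u' - u : At.domain) : H) = 0 := by
      have he : At u' - lam • (u' : H) = At u - lam • (u : H) := by rw [hu, hu']
      have hre : (At u' - At u) - (lam • (u' : H) - lam • (u : H))
          = (At u' - lam • (u' : H)) - (At u - lam • (u : H)) := by abel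
      rw [LinearPMap.map_sub, hcoe, smul_sub, hre, he, sub_self]
    have hker1 : ((u' - u : At.domain) : H) ∈
        {x : H | ∃ hx : x ∈ At.domain, At ⟨x, hx⟩ = lam • x} := by
      refine ⟨(u' - u).2, ?_⟩
      have hmk : (⟨((u' - u : At.domain) : H), (u' - u).2⟩ : At.domain) = u' - u := rfl
      rw [hmk]
      exact sub_eq_zero.mp hd0
    rw [hpart1] at hker1
    have he := (hT 0 W.zero_mem).unique hker1 hzmem
    have h5 : u' - u = 0 := by
      apply Subtype.ext; simpa using he
    exact sub_eq_zero.mp h5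

end GrubbExt
end
end

section
/- (Theorem 8.1, 1°.) In the symmetric setup, let Ã ∈ M be closed, corresponding to T : V → W, with D(T) ≠ {0}. If V ⊂ W and m(T) > −m(A_γ), then m(Ã) ≥ m(T)·m(A_γ)/(m(T) + m(A_γ)); in particular Ã is lower bounded. -/
noncomputable section

open Filter Topology

namespace GrubbExt

variable {H : Type*} [NormedAddCommGroup H] [InnerProductSpace ℂ H] [CompleteSpace H]

lemma glb_ray_bound (P : H →ₗ.[ℂ] H) (m : ℝ) (hm : IsGLB (raySet P) m)
    (w : P.domain) : m * ‖(w : H)‖ ^ 2 ≤ (inner ℂ (P w) (w : H) : ℂ).re := by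
  rcases eq_or_ne (w : H) 0 with h0 | h0
  · have hw : w = 0 := Subtype.coe_injective h0
    simp [hw]
  · set n : ℝ := ‖(w : H)‖ with hn
    have hnpos : 0 < n := norm_pos_iff.mpr h0
    set c : ℂ := ((n⁻¹ : ℝ) : ℂ) with hc
    have hwn : ‖((c • w : P.domain) : H)‖ = 1 := by
      rw [Submodule.coe_smul, norm_smul, hc, Complex.norm_real, Real.norm_eq_abs,
        abs_of_nonneg (inv_nonneg.mpr hnpos.le), ← hn]
      field_simp
    have hle := hm.1 ⟨c • w, hwn, rfl⟩
    have hval : (inner ℂ (P (c • w)) ((c • w : P.domain) : H) : ℂ).re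
        = n⁻¹ ^ 2 * (inner ℂ (P w) (w : H) : ℂ).re := by
      rw [P.map_smul, Submodule.coe_smul, inner_smul_left, inner_smul_right, hc,
        Complex.conj_ofReal,
        show ((n⁻¹ : ℝ) : ℂ) * (((n⁻¹ : ℝ) : ℂ) * (inner ℂ (P w) (w : H) : ℂ))
          = ((n⁻¹ ^ 2 : ℝ) : ℂ) * (inner ℂ (P w) (w : H) : ℂ) by push_cast; ring,
        Complex.re_ofReal_mul]
    rw [hval] at hle
    have h2 : 0 < n ^ 2 := by positivity
    calc m * n ^ 2 ≤ (n⁻¹ ^ 2 * (inner ℂ (P w) (w : H) : ℂ).re) * n ^ 2 := by nlinarith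
      _ = (inner ℂ (P w) (w : H) : ℂ).re := by field_simp

lemma key_ineq (mT mg a b : ℝ) (ha : 0 ≤ a) (hb : 0 ≤ b) (hab : 1 ≤ a + b)
    (hba : b ≤ 1 + a) (hgpos : 0 < mg) (hsum : 0 < mT + mg) :
    mT * mg / (mT + mg) ≤ mg * a ^ 2 + mT * b ^ 2 := by
  rw [div_le_iff₀ hsum]
  rcases le_or_gt 0 mT with h | h
  · have h1 : 0 ≤ mT * mg * ((a + b) ^ 2 - 1) :=
      mul_nonneg (mul_nonneg h hgpos.le) (by nlinarith)
    nlinarith [sq_nonneg (mg * a - mT * b), h1]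
  · have h2 : 0 ≤ (mT + mg) * (-mT) * ((1 + a) ^ 2 - b ^ 2) :=
      mul_nonneg (mul_nonneg hsum.le (neg_nonneg.mpr h.le)) (by nlinarith)
    nlinarith [sq_nonneg ((mT + mg) * a + mT), h2]
theorem statement_16 (S : Setup H) (hsym : S.Amin' = S.Amin) (hsa : S.Agam.adjoint = S.Agam)
    (At : H →ₗ.[ℂ] H)
    (h1 : S.Amin ≤ At) (h2 : At ≤ S.Amax)
    (hcl : IsClosed (At.graph : Set (H × H)))
    (T : H →ₗ.[ℂ] H) (hT : (T.graph : Set (H × H)) = S.Tgraph At)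
    (hD : ∃ x : T.domain, (x : H) ≠ 0)
    (hVW : S.Vsub At ≤ S.Wsub At)
    (mT mg : ℝ) (hmT : IsGLB (raySet T) mT) (hmg : IsGLB (raySet S.Agam) mg)
    (hgpos : 0 < mg) (hgt : -mg < mT) :
    (∀ r ∈ raySet At, mT * mg / (mT + mg) ≤ r) ∧
    ∃ c : ℝ, ∀ r ∈ raySet At, c ≤ r := by
  have hsum : 0 < mT + mg := by linarith
  have main : ∀ r ∈ raySet At, mT * mg / (mT + mg) ≤ r := by
    rintro r ⟨u, hnorm, rfl⟩
    have hmaxdom : (u : H) ∈ S.Amax.domain := h2.1 u.2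
    set U : S.Amax.domain := ⟨(u : H), hmaxdom⟩ with hU
    have hAtU : At u = S.Amax U := h2.2 rfl
    set f : H := S.Amax U with hf
    have hgdom : S.Agaminv f ∈ S.Agam.domain := S.Agaminv_mem f
    set UG : S.Agam.domain := ⟨S.Agaminv f, hgdom⟩ with hUG
    have hAg : S.Agam UG = f := S.Agaminv_right f
    set uz : H := S.uzeta U with huz
    have huz' : uz = (u : H) - (UG : H) := by
      simp only [huz, Setup.uzeta, hUG, hf, hU]
    have hdecomp : (u : H) = (UG : H) + uz := by rw [huz']; abel
    -- membership of uz in W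
    have hVmem : uz ∈ S.Vsub At :=
      Submodule.le_topologicalClosure _ (Submodule.subset_span ⟨U, u.2, rfl⟩)
    have hWmem : uz ∈ S.Wsub At := hVW hVmem
    haveI : CompleteSpace (S.Wsub At) := (S.isClosed_Wsub At).completeSpace_coe
    set g : H := projCl (S.Wsub At) (S.isClosed_Wsub At) f with hg
    have hgproj : g = ((S.Wsub At).orthogonalProjectionOnto f : H) := rfl
    have horth : (inner ℂ f uz : ℂ) = inner ℂ g uz := by
      have h0 : (inner ℂ (f - g) uz : ℂ) = 0 := by
        rw [hgproj]
        exact Submodule.inner_left_of_mem_orthogonal hWmem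
          (Submodule.sub_starProjection_mem_orthogonal (K := S.Wsub At) f)
      rw [inner_sub_left] at h0
      exact sub_eq_zero.mp h0
    -- uz belongs to the graph of T
    have hmemT : ((uz, g) : H × H) ∈ T.graph := by
      have : ((uz, g) : H × H) ∈ (T.graph : Set (H × H)) := by
        rw [hT]
        exact ⟨U, u.2, rfl, rfl⟩
      exact this
    obtain ⟨t, ht1, ht2⟩ := T.mem_graph_iff.mp hmemT
    have ht1' : (t : H) = uz := ht1
    have ht2' : T t = g := ht2
    -- lower bounds for the two inner products
    have hb1 : mg * ‖(UG : H)‖ ^ 2 ≤ (inner ℂ f (UG : H) : ℂ).re := by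
      have := glb_ray_bound S.Agam mg hmg UG
      rwa [hAg] at this
    have hb2 : mT * ‖uz‖ ^ 2 ≤ (inner ℂ f uz : ℂ).re := by
      have := glb_ray_bound T mT hmT t
      rwa [ht1', ht2', ← horth] at this
    -- splitting of the form
    have hsplit : (inner ℂ (At u) (u : H) : ℂ).re
        = (inner ℂ f (UG : H) : ℂ).re + (inner ℂ f uz : ℂ).re := by
      rw [hAtU]
      conv_lhs => rw [hdecomp]
      rw [inner_add_right, Complex.add_re]
    -- norm estimates
    set a : ℝ := ‖(UG : H)‖ with hA
    set b : ℝ := ‖uz‖ with hB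
    have hab : 1 ≤ a + b := by
      calc (1 : ℝ) = ‖(u : H)‖ := hnorm.symm
        _ ≤ a + b := by rw [hdecomp]; exact norm_add_le _ _
    have hba : b ≤ 1 + a := by
      calc b = ‖(u : H) - (UG : H)‖ := by rw [hB, huz']
        _ ≤ ‖(u : H)‖ + a := norm_sub_le _ _
        _ = 1 + a := by rw [hnorm]
    calc mT * mg / (mT + mg) ≤ mg * a ^ 2 + mT * b ^ 2 :=
          key_ineq mT mg a b (norm_nonneg _) (norm_nonneg _) hab hba hgpos hsum
      _ ≤ (inner ℂ f (UG : H) : ℂ).re + (inner ℂ f uz : ℂ).re := by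
          have := hb1; have := hb2; linarith
      _ = (inner ℂ (At u) (u : H) : ℂ).re := hsplit.symm
  exact ⟨main, ⟨mT * mg / (mT + mg), main⟩⟩

end GrubbExt
end
end
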